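/- For nonzero PSD matrices K_X, K_Y ∈ ℝ^{M×M}, NBS(K_X, K_Y) ≥ Tr[K_X^{1/2} K_Y^{1/2}] / √(Tr K_X · Tr K_Y), i.e., the normalized Bures similarity is at least the CKA of the PSD square roots. -/

import Mathlib

open Matrix

lemma real_conjTranspose_eq {m n : ℕ} (A : Matrix (Fin m) (Fin n) ℝ) : Aᴴ = Aᵀ := rfl

lemma psd_tmul {m n : ℕ} (A : Matrix (Fin m) (Fin n) ℝ) : (Aᵀ * A).PosSemidef := by
  have h := Matrix.posSemidef_conjTranspose_mul_self A
  rwa [real_conjTranspose_eq] at h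

lemma psd_gram {m n : ℕ} (A : Matrix (Fin m) (Fin n) ℝ) : (A * Aᵀ).PosSemidef := by
  have h := Matrix.posSemidef_self_mul_conjTranspose A
  rwa [real_conjTranspose_eq] at h

open scoped ComplexOrder in
/-- The positive semidefinite square root of a positive semidefinite matrix (as in the older Mathlib). -/
noncomputable def Matrix.PosSemidef.sqrt {n 𝕜 : Type*} [Fintype n] [RCLike 𝕜] [DecidableEq n]
    {A : Matrix n n 𝕜} (hA : A.PosSemidef) : Matrix n n 𝕜 :=
  hA.1.eigenvectorUnitary.1 * diagonal ((↑) ∘ (√·) ∘ hA.1.eigenvalues) *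
    (star hA.1.eigenvectorUnitary : Matrix n n 𝕜)

open scoped ComplexOrder in
lemma Matrix.PosSemidef.posSemidef_sqrt {n 𝕜 : Type*} [Fintype n] [RCLike 𝕜] [DecidableEq n]
    {A : Matrix n n 𝕜} (hA : A.PosSemidef) : hA.sqrt.PosSemidef := by
  unfold Matrix.PosSemidef.sqrt
  exact (posSemidef_diagonal_iff.2 fun i => RCLike.ofReal_nonneg.2 (Real.sqrt_nonneg _)).mul_mul_conjTranspose_same _

open scoped ComplexOrder in
lemma psd_sqrt_mul_self {n 𝕜 : Type*} [Fintype n] [RCLike 𝕜] [DecidableEq n]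
    {A : Matrix n n 𝕜} (hA : A.PosSemidef) : hA.sqrt * hA.sqrt = A := by
  unfold Matrix.PosSemidef.sqrt
  have hUU : (star hA.1.eigenvectorUnitary : Matrix n n 𝕜) * (hA.1.eigenvectorUnitary : Matrix n n 𝕜) = 1 :=
    Unitary.coe_star_mul_self _
  conv_rhs => rw [hA.1.spectral_theorem, Unitary.conjStarAlgAut_apply]
  set U := (hA.1.eigenvectorUnitary : Matrix n n 𝕜)
  set V := (star hA.1.eigenvectorUnitary : Matrix n n 𝕜)
  set D := (diagonal ((↑) ∘ (√·) ∘ hA.1.eigenvalues) : Matrix n n 𝕜)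
  rw [show U * D * V * (U * D * V) = U * (D * (V * U) * D) * V by simp only [mul_assoc]]
  rw [hUU, mul_one, diagonal_mul_diagonal]
  congr 2
  congr 1
  funext i
  simp only [Function.comp_apply]
  rw [← RCLike.ofReal_mul, Real.mul_self_sqrt (hA.eigenvalues_nonneg i)]

lemma psd_sand {M : ℕ} {Kx Ky : Matrix (Fin M) (Fin M) ℝ} (hx : Kx.PosSemidef) (hy : Ky.PosSemidef) :
    (hx.sqrt * Ky * hx.sqrt).PosSemidef := by
  have h := hy.mul_mul_conjTranspose_same hx.sqrt
  rwa [hx.posSemidef_sqrt.isHermitian.eq] at h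

/-- Nuclear norm: sum of singular values, i.e. `Tr[(AᵀA)^{1/2}]`. -/
noncomputable def nuclearNorm {m n : ℕ} (A : Matrix (Fin m) (Fin n) ℝ) : ℝ :=
  (Matrix.PosSemidef.sqrt (psd_tmul A)).trace

/-- Frobenius norm. -/
noncomputable def frobNorm {m n : ℕ} (A : Matrix (Fin m) (Fin n) ℝ) : ℝ :=
  Real.sqrt (Matrix.trace (Aᵀ * A))

/-- Fidelity `Tr[(Kx^{1/2} Ky Kx^{1/2})^{1/2}]` between PSD matrices. -/
noncomputable def fidelity {M : ℕ} {Kx Ky : Matrix (Fin M) (Fin M) ℝ}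
    (hx : Kx.PosSemidef) (hy : Ky.PosSemidef) : ℝ :=
  (Matrix.PosSemidef.sqrt (psd_sand hx hy)).trace


lemma trace_le_of_sq {M : ℕ} (B S : Matrix (Fin M) (Fin M) ℝ) (hS : S.PosSemidef)
    (h : B * Bᵀ = S * S) : B.trace ≤ S.trace := by
  have hH := hS.isHermitian
  set U : Matrix (Fin M) (Fin M) ℝ := (hH.eigenvectorUnitary : Matrix (Fin M) (Fin M) ℝ) with hU
  have hUU : U * star U = 1 := (Matrix.mem_unitaryGroup_iff).mp hH.eigenvectorUnitary.2
  have hUU' : star U * U = 1 := (Matrix.mem_unitaryGroup_iff').mp hH.eigenvectorUnitary.2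
  set d : Fin M → ℝ := hH.eigenvalues with hd
  have hdiag : star U * S * U = diagonal d := by
    have := hH.conjStarAlgAut_star_eigenvectorUnitary
    simpa using this
  set C : Matrix (Fin M) (Fin M) ℝ := star U * B * U with hC
  have htr : C.trace = B.trace := by
    rw [hC, Matrix.trace_mul_comm, ← mul_assoc, hUU, one_mul]
  have hCC : C * star C = diagonal d * diagonal d := by
    have hstarC : star C = star U * star B * U := by
      simp [hC, Matrix.star_mul, mul_assoc]
    rw [hC, hstarC]
    have e1 : star U * B * U * (star U * star B * U) = star U * (B * star B) * U := by
      simp only [mul_assoc]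
      rw [← mul_assoc U (star U), hUU, one_mul]
    rw [e1, show star B = Bᵀ from rfl, h, ← hdiag]
    simp only [mul_assoc]
    rw [← mul_assoc U (star U), hUU, one_mul]
  have hrow : ∀ i, ∑ j, (C i j)^2 = (d i)^2 := by
    intro i
    have hCC' := hCC
    rw [Matrix.diagonal_mul_diagonal] at hCC'
    have := congrFun (congrFun hCC' i) i
    simp only [Matrix.mul_apply, Matrix.diagonal_apply_eq] at this
    simpa [pow_two] using this
  have hdnn : ∀ i, 0 ≤ d i := fun i => hS.eigenvalues_nonneg i
  have hCle : ∀ i, C i i ≤ d i := by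
    intro i
    have h1 : (C i i)^2 ≤ (d i)^2 := by
      rw [← hrow i]
      exact Finset.single_le_sum (f := fun j => (C i j)^2) (fun j _ => sq_nonneg _)
        (Finset.mem_univ i)
    calc C i i ≤ |C i i| := le_abs_self _
      _ = Real.sqrt ((C i i)^2) := (Real.sqrt_sq_eq_abs _).symm
      _ ≤ Real.sqrt ((d i)^2) := Real.sqrt_le_sqrt h1
      _ = d i := Real.sqrt_sq (hdnn i)
  have hStr : S.trace = ∑ i, d i := by
    conv_lhs => rw [hH.spectral_theorem, Unitary.conjStarAlgAut_apply]
    rw [Matrix.trace_mul_comm, ← mul_assoc, hUU', one_mul]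
    simp [Matrix.trace_diagonal, hd]
  rw [← htr, hStr, Matrix.trace]
  exact Finset.sum_le_sum fun i _ => hCle i

theorem nbs_ge_cka_of_sqrts (M : ℕ) (Kx Ky : Matrix (Fin M) (Fin M) ℝ)
    (hx : Kx.PosSemidef) (hy : Ky.PosSemidef) (hx0 : Kx ≠ 0) (hy0 : Ky ≠ 0) :
    fidelity hx hy / Real.sqrt (Matrix.trace Kx * Matrix.trace Ky) ≥
      Matrix.trace (hx.sqrt * hy.sqrt) / Real.sqrt (Matrix.trace Kx * Matrix.trace Ky) := by
  have hB : (hx.sqrt * hy.sqrt) * (hx.sqrt * hy.sqrt)ᵀ =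
      (psd_sand hx hy).sqrt * (psd_sand hx hy).sqrt := by
    rw [psd_sqrt_mul_self (psd_sand hx hy), Matrix.transpose_mul,
      ← real_conjTranspose_eq, ← real_conjTranspose_eq,
      hx.posSemidef_sqrt.isHermitian.eq, hy.posSemidef_sqrt.isHermitian.eq]
    have : hx.sqrt * hy.sqrt * (hy.sqrt * hx.sqrt)
        = hx.sqrt * (hy.sqrt * hy.sqrt) * hx.sqrt := by
      simp only [mul_assoc]
    rw [this, psd_sqrt_mul_self hy]
  have key : Matrix.trace (hx.sqrt * hy.sqrt) ≤ fidelity hx hy :=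
    trace_le_of_sq _ _ (psd_sand hx hy).posSemidef_sqrt hB
  rcases eq_or_lt_of_le (Real.sqrt_nonneg (Matrix.trace Kx * Matrix.trace Ky)) with h0 | h0
  · rw [← h0, div_zero, div_zero]
  · exact (div_le_div_iff_of_pos_right h0).mpr key
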